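/- Let λ_1 ≤ … ≤ λ_N be the real roots of a monic real polynomial p of degree N, and let ε > 0. Suppose exactly k−1 of the roots lie in (−ε, ε), no roots lie in [ε, (1 + 4/(k−1))ε), and p' has at least k roots in (−ε, ε) (counted with multiplicity), where k ≥ 2. Then Σ_{j : λ_j ∉ (−ε, (1+4/(k−1))ε)} 1/(λ_j − ε) ≥ (k−1)/(2ε). -/

import Mathlib

open Polynomial

private lemma derivative_prod_X_sub_C {ι : Type*} [DecidableEq ι] (s : Finset ι) (g : ι → ℝ) :
    derivative (∏ j ∈ s, (X - C (g j))) = ∑ i ∈ s, ∏ j ∈ s.erase i, (X - C (g j)) := by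
  induction s using Finset.induction_on with
  | empty => simp
  | @insert a s h ih =>
    rw [Finset.prod_insert h, derivative_mul, derivative_X_sub_C, one_mul, ih, Finset.mul_sum,
      Finset.sum_insert h, Finset.erase_insert h]
    congr 1
    refine Finset.sum_congr rfl fun i hi => ?_
    rw [Finset.erase_insert_of_ne (by rintro rfl; exact h hi),
      Finset.prod_insert (fun hc => h (Finset.mem_of_mem_erase hc))]

private lemma eval_derivative_prod {N : ℕ} (lam : Fin N → ℝ) {y : ℝ}
    (hy : ∀ j, y ≠ lam j) :
    (derivative (∏ j : Fin N, (X - C (lam j)))).eval y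
      = (∏ j : Fin N, (y - lam j)) * ∑ j : Fin N, (y - lam j)⁻¹ := by
  rw [derivative_prod_X_sub_C, eval_finset_sum, Finset.mul_sum]
  refine Finset.sum_congr rfl fun i _ => ?_
  rw [eval_prod]
  simp only [eval_sub, eval_X, eval_C]
  have h0 : y - lam i ≠ 0 := sub_ne_zero.mpr (hy i)
  have hpe := Finset.prod_erase_mul Finset.univ (fun j => y - lam j) (Finset.mem_univ i)
  exact (eq_mul_inv_iff_mul_eq₀ h0).mpr hpe

private lemma sum_inv_eq_zero {N : ℕ} (lam : Fin N → ℝ) {y : ℝ} (hy : ∀ j, y ≠ lam j)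
    (h0 : (derivative (∏ j : Fin N, (X - C (lam j)))).eval y = 0) :
    ∑ j : Fin N, (y - lam j)⁻¹ = 0 := by
  rw [eval_derivative_prod lam hy] at h0
  have hP : (∏ j : Fin N, (y - lam j)) ≠ 0 :=
    Finset.prod_ne_zero_iff.mpr fun j _ => sub_ne_zero.mpr (hy j)
  exact (mul_eq_zero.mp h0).resolve_left hP

private lemma sum_inv_lt {N : ℕ} (hN : 0 < N) (lam : Fin N → ℝ) {a b : ℝ} (hab : a < b)
    (h : ∀ j, lam j < a ∨ b < lam j) :
    ∑ j : Fin N, (b - lam j)⁻¹ < ∑ j : Fin N, (a - lam j)⁻¹ := by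
  haveI : Nonempty (Fin N) := ⟨⟨0, hN⟩⟩
  refine Finset.sum_lt_sum_of_nonempty Finset.univ_nonempty fun j _ => ?_
  rcases h j with hj | hj
  · have h1 : 0 < a - lam j := by linarith
    have := one_div_lt_one_div_of_lt h1 (by linarith : a - lam j < b - lam j)
    simpa [one_div] using this
  · have h1 : b - lam j < 0 := by linarith
    have := one_div_lt_one_div_of_neg_of_lt h1 (by linarith : a - lam j < b - lam j)
    simpa [one_div] using this

private lemma second_deriv_ne_zero {N : ℕ} (hN : 0 < N) (lam : Fin N → ℝ) {y : ℝ}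
    (hy : ∀ j, y ≠ lam j)
    (h1 : (derivative (∏ j : Fin N, (X - C (lam j)))).eval y = 0) :
    (derivative (derivative (∏ j : Fin N, (X - C (lam j))))).eval y ≠ 0 := by
  classical
  set P : Polynomial ℝ := ∏ j : Fin N, (X - C (lam j)) with hPdef
  have hg : HasDerivAt (fun x => ∑ j : Fin N, (x - lam j)⁻¹)
      (∑ j : Fin N, -(((y - lam j) ^ 2)⁻¹)) y := by
    apply HasDerivAt.fun_sum
    intro j _
    have h0 : y - lam j ≠ 0 := sub_ne_zero.mpr (hy j)
    have hinner : HasDerivAt (fun x : ℝ => x - lam j) 1 y := (hasDerivAt_id y).sub_const _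
    have := hinner.fun_inv h0
    refine this.congr_deriv ?_
    ring
  have hf : HasDerivAt (fun x => P.eval x * ∑ j : Fin N, (x - lam j)⁻¹)
      (P.eval y * ∑ j : Fin N, -(((y - lam j) ^ 2)⁻¹)) y := by
    have hp := P.hasDerivAt y
    have := hp.fun_mul hg
    rw [h1] at this
    simpa using this
  have heq : (fun x => (derivative P).eval x)
      =ᶠ[nhds y] fun x => P.eval x * ∑ j : Fin N, (x - lam j)⁻¹ := by
    have hev : ∀ᶠ x in nhds y, ∀ j, x ≠ lam j := by
      rw [Filter.eventually_all]
      exact fun j => eventually_ne_nhds (hy j)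
    filter_upwards [hev] with x hx
    have heval : P.eval x = ∏ j : Fin N, (x - lam j) := by
      rw [hPdef, eval_prod]; simp
    rw [hPdef] at heval ⊢
    rw [heval]
    exact eval_derivative_prod lam hx
  have hd : HasDerivAt (fun x => (derivative P).eval x)
      (P.eval y * ∑ j : Fin N, -(((y - lam j) ^ 2)⁻¹)) y :=
    hf.congr_of_eventuallyEq heq
  have hd2 := (derivative P).hasDerivAt y
  rw [hd2.unique hd]
  apply mul_ne_zero
  · have : P.eval y = ∏ j : Fin N, (y - lam j) := by
      rw [hPdef, eval_prod]; simp
    rw [this]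
    exact Finset.prod_ne_zero_iff.mpr fun j _ => sub_ne_zero.mpr (hy j)
  · haveI : Nonempty (Fin N) := ⟨⟨0, hN⟩⟩
    refine ne_of_lt (Finset.sum_neg (fun j _ => ?_) Finset.univ_nonempty)
    have h0 : y - lam j ≠ 0 := sub_ne_zero.mpr (hy j)
    have : 0 < (y - lam j) ^ 2 := by positivity
    have := inv_pos.mpr this
    linarith

theorem far_roots_sum_lower_bound (N k : ℕ) (hk : 2 ≤ k) (ε : ℝ) (hε : 0 < ε)
    (lam : Fin N → ℝ)
    (p : Polynomial ℝ) (hp : p = ∏ j : Fin N, (X - C (lam j)))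
    (hwindow : (Finset.univ.filter (fun j => -ε < lam j ∧ lam j < ε)).card = k - 1)
    (hgap : ∀ j : Fin N, ¬ (ε ≤ lam j ∧ lam j < (1 + 4 / ((k : ℝ) - 1)) * ε))
    (hcrit : k ≤ ((Polynomial.derivative p).roots.filter
        (fun x => -ε < x ∧ x < ε)).card) :
    ((k : ℝ) - 1) / (2 * ε)
      ≤ ∑ j ∈ Finset.univ.filter
          (fun j => ¬ (-ε < lam j ∧ lam j < (1 + 4 / ((k : ℝ) - 1)) * ε)),
          1 / (lam j - ε) := by
  classical
  subst hp
  set P : Polynomial ℝ := ∏ j : Fin N, (X - C (lam j)) with hPdef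
  have hk1 : (1:ℝ) ≤ (k:ℝ) - 1 := by
    have : (2:ℝ) ≤ (k:ℝ) := by exact_mod_cast hk
    linarith
  have hcε : ε < (1 + 4 / ((k : ℝ) - 1)) * ε := by
    have h4 : 0 < 4 / ((k:ℝ)-1) * ε := by positivity
    nlinarith
  have hNpos : 0 < N := by
    have h1 := Finset.card_filter_le (Finset.univ : Finset (Fin N))
      (fun j => -ε < lam j ∧ lam j < ε)
    rw [Finset.card_univ, Fintype.card_fin] at h1
    omega
  have hP0 : P ≠ 0 :=
    (monic_prod_of_monic _ _ fun j _ => monic_X_sub_C _).ne_zero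
  have hPeval : ∀ x : ℝ, P.eval x = ∏ j : Fin N, (x - lam j) := by
    intro x; rw [hPdef, eval_prod]; simp
  have hProots : P.roots = Multiset.map lam Finset.univ.val := by
    rw [hPdef, Finset.prod_eq_multiset_prod]
    have hmm : Multiset.map (fun j => X - C (lam j)) Finset.univ.val
        = Multiset.map (fun a => X - C a) (Multiset.map lam Finset.univ.val) := by
      rw [Multiset.map_map]; rfl
    rw [hmm, roots_multiset_prod_X_sub_C]
  have hcount : ∀ (Q : ℝ → Prop) (_ : DecidablePred Q),
      (P.roots.filter Q).card = (Finset.univ.filter (fun j => Q (lam j))).card := by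
    intro Q _
    rw [hProots, Multiset.filter_map, Multiset.card_map]
    rfl
  -- trichotomy for roots
  have hgap' : ∀ j, lam j < ε ∨ (1 + 4 / ((k : ℝ) - 1)) * ε ≤ lam j := by
    intro j
    by_cases h : lam j < ε
    · exact Or.inl h
    · right
      push_neg at h
      by_contra hlt
      push_neg at hlt
      exact hgap j ⟨h, hlt⟩
  -- the largest root below ε
  set W : Finset (Fin N) := Finset.univ.filter (fun j => -ε < lam j ∧ lam j < ε) with hWdef
  have hWne : W.Nonempty := by
    rw [← Finset.card_pos, hWdef, hwindow]; omega
  set L : ℝ := (W.image lam).max' (hWne.image lam) with hLdef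
  obtain ⟨jL, hjLW, hjL⟩ := Finset.mem_image.mp ((W.image lam).max'_mem (hWne.image lam))
  have hjL' : lam jL = L := by rw [hLdef]; exact hjL
  have hjLw : -ε < lam jL ∧ lam jL < ε := (Finset.mem_filter.mp hjLW).2
  have hLlt : L < ε := by rw [← hjL']; exact hjLw.2
  have hLgt : -ε < L := by rw [← hjL']; exact hjLw.1
  have hLroot : P.IsRoot L := by
    rw [IsRoot, hPeval]
    exact Finset.prod_eq_zero (Finset.mem_univ jL) (by rw [hjL']; ring)
  have hLmax : ∀ j, lam j < ε → lam j ≤ L := by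
    intro j hj
    by_cases hw : -ε < lam j
    · exact Finset.le_max' _ _ (Finset.mem_image_of_mem lam (Finset.mem_filter.mpr ⟨Finset.mem_univ j, hw, hj⟩))
    · push_neg at hw
      linarith
  have htrich : ∀ j, lam j ≤ L ∨ (1 + 4 / ((k : ℝ) - 1)) * ε ≤ lam j := by
    intro j
    rcases hgap' j with h | h
    · exact Or.inl (hLmax j h)
    · exact Or.inr h
  have hrootne : ∀ x : ℝ, ¬ P.IsRoot x → ∀ j, x ≠ lam j := by
    intro x hx j he
    exact hx (by rw [IsRoot, hPeval]; exact Finset.prod_eq_zero (Finset.mem_univ j) (by rw [he]; ring))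
  have hP'0 : derivative P ≠ 0 := by
    intro h
    rw [h] at hcrit
    simp at hcrit
    omega
  -- counting: roots of P' in (-ε, L] are at most k - 1
  have hcnt : ((derivative P).roots.filter (fun x => -ε < x ∧ x ≤ L)).card ≤ k - 1 := by
    set s := (derivative P).roots with hs
    set t := s.filter (fun x => -ε < x ∧ x ≤ L) with ht
    set F := t.toFinset with hF
    have hmemF : ∀ x ∈ F, (-ε < x ∧ x ≤ L) ∧ x ∈ s := by
      intro x hx
      rw [hF, Multiset.mem_toFinset, ht, Multiset.mem_filter] at hx
      exact ⟨hx.2, hx.1⟩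
    have hcardt : t.card = ∑ x ∈ F, s.count x := by
      rw [← Multiset.toFinset_sum_count_eq t]
      refine Finset.sum_congr rfl fun x hx => ?_
      rw [ht, Multiset.count_filter, if_pos (hmemF x hx).1]
    set D : Finset ℝ := (P.roots.filter (fun x => -ε < x ∧ x ≤ L)).toFinset with hD
    have hmemD : ∀ x, x ∈ D ↔ (x ∈ P.roots ∧ (-ε < x ∧ x ≤ L)) := by
      intro x
      rw [hD, Multiset.mem_toFinset, Multiset.mem_filter]
    have hDsum : ∑ x ∈ D, P.roots.count x = k - 1 := by
      have h1 : ∑ x ∈ D, (P.roots.filter (fun x => -ε < x ∧ x ≤ L)).count x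
          = (P.roots.filter (fun x => -ε < x ∧ x ≤ L)).card :=
        Multiset.toFinset_sum_count_eq _
      have h2 : ∀ x ∈ D, (P.roots.filter (fun x => -ε < x ∧ x ≤ L)).count x
          = P.roots.count x := by
        intro x hx
        rw [Multiset.count_filter, if_pos ((hmemD x).mp hx).2]
      calc ∑ x ∈ D, P.roots.count x
          = ∑ x ∈ D, (P.roots.filter (fun x => -ε < x ∧ x ≤ L)).count x :=
            (Finset.sum_congr rfl h2).symm
        _ = (P.roots.filter (fun x => -ε < x ∧ x ≤ L)).card := h1
        _ = (Finset.univ.filter (fun j => -ε < lam j ∧ lam j ≤ L)).card :=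
            hcount (fun x => -ε < x ∧ x ≤ L) (by infer_instance)
        _ = (Finset.univ.filter (fun j => -ε < lam j ∧ lam j < ε)).card := by
            refine congrArg Finset.card (Finset.filter_congr fun j _ => ?_)
            constructor
            · rintro ⟨h1', h2'⟩; exact ⟨h1', lt_of_le_of_lt h2' hLlt⟩
            · rintro ⟨h1', h2'⟩; exact ⟨h1', hLmax j h2'⟩
        _ = k - 1 := hwindow
    have hsplit : ∑ x ∈ F, s.count x
        = ∑ x ∈ F.filter (fun x => P.IsRoot x), s.count x
          + ∑ x ∈ F.filter (fun x => ¬ P.IsRoot x), s.count x :=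
      (Finset.sum_filter_add_sum_filter_not F _ _).symm
    have hF1sub : F.filter (fun x => P.IsRoot x) ⊆ D := by
      intro x hx
      obtain ⟨hxF, hxr⟩ := Finset.mem_filter.mp hx
      exact (hmemD x).mpr ⟨(mem_roots hP0).mpr hxr, (hmemF x hxF).1⟩
    have hA : ∑ x ∈ F.filter (fun x => P.IsRoot x), s.count x
        ≤ ∑ x ∈ D, (P.roots.count x - 1) := by
      have heq : ∀ x ∈ F.filter (fun x => P.IsRoot x), s.count x = P.roots.count x - 1 := by
        intro x hx
        obtain ⟨hxF, hxr⟩ := Finset.mem_filter.mp hx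
        rw [hs, count_roots, count_roots, derivative_rootMultiplicity_of_root hxr]
      rw [Finset.sum_congr rfl heq]
      exact Finset.sum_le_sum_of_subset hF1sub
    have hBcount : ∀ x ∈ F.filter (fun x => ¬ P.IsRoot x), s.count x = 1 := by
      intro x hx
      obtain ⟨hxF, hxnr⟩ := Finset.mem_filter.mp hx
      obtain ⟨hQ, hxs⟩ := hmemF x hxF
      have hxne : ∀ j, x ≠ lam j := hrootne x hxnr
      have hroot' : (derivative P).IsRoot x := (mem_roots hP'0).mp hxs
      have hm1 : 1 ≤ s.count x := Multiset.one_le_count_iff_mem.mpr hxs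
      have hceq : s.count x = rootMultiplicity x (derivative P) := by
        rw [hs, count_roots]
      by_contra hne
      have h2 : 2 ≤ rootMultiplicity x (derivative P) := by omega
      have hmult := derivative_rootMultiplicity_of_root hroot'
      have hdd0 : derivative (derivative P) ≠ 0 := by
        intro h
        rw [h, rootMultiplicity_zero] at hmult
        omega
      have hroot'' : (derivative (derivative P)).IsRoot x :=
        (rootMultiplicity_pos hdd0).mp (by omega)
      exact second_deriv_ne_zero hNpos lam hxne (hPdef ▸ hroot') (hPdef ▸ hroot'')
    have hLD : L ∈ D := (hmemD L).mpr ⟨(mem_roots hP0).mpr hLroot, hLgt, le_refl L⟩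
    -- injection from non-root critical points into D
    set f : ℝ → ℝ := fun x =>
      if h : (D.filter (fun r => x < r)).Nonempty then (D.filter (fun r => x < r)).min' h
      else L with hfdef
    have hfprop : ∀ x ∈ F.filter (fun x => ¬ P.IsRoot x),
        x < f x ∧ f x ∈ D ∧ ∀ ρ ∈ D, x < ρ → f x ≤ ρ := by
      intro x hx
      obtain ⟨hxF, hxnr⟩ := Finset.mem_filter.mp hx
      obtain ⟨hQ, hxs⟩ := hmemF x hxF
      have hxL : x < L := lt_of_le_of_ne hQ.2 (fun he => hxnr (he ▸ hLroot))
      have hne : (D.filter (fun r => x < r)).Nonempty :=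
        ⟨L, Finset.mem_filter.mpr ⟨hLD, hxL⟩⟩
      have hfx : f x = (D.filter (fun r => x < r)).min' hne := by
        rw [hfdef]; simp [hne]
      have hmem := (D.filter (fun r => x < r)).min'_mem hne
      rw [← hfx] at hmem
      obtain ⟨hfD, hfgt⟩ := Finset.mem_filter.mp hmem
      refine ⟨hfgt, hfD, fun ρ hρ hlt => ?_⟩
      rw [hfx]
      exact Finset.min'_le _ _ (Finset.mem_filter.mpr ⟨hρ, hlt⟩)
    have hkey : ∀ x₁ ∈ F.filter (fun x => ¬ P.IsRoot x),
        ∀ x₂ ∈ F.filter (fun x => ¬ P.IsRoot x), x₁ < x₂ → f x₁ ≠ f x₂ := by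
      intro x₁ h₁ x₂ h₂ hlt heq
      obtain ⟨hgt₁, hD₁, hmin₁⟩ := hfprop x₁ h₁
      obtain ⟨hgt₂, hD₂, hmin₂⟩ := hfprop x₂ h₂
      obtain ⟨h₁F, h₁nr⟩ := Finset.mem_filter.mp h₁
      obtain ⟨h₂F, h₂nr⟩ := Finset.mem_filter.mp h₂
      obtain ⟨hQ₁, hs₁⟩ := hmemF x₁ h₁F
      obtain ⟨hQ₂, hs₂⟩ := hmemF x₂ h₂F
      have hnogap : ∀ j, lam j < x₁ ∨ x₂ < lam j := by
        intro j
        by_contra hcon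
        push_neg at hcon
        obtain ⟨ha, hb⟩ := hcon
        have hjroot : P.IsRoot (lam j) := by
          rw [IsRoot, hPeval]
          exact Finset.prod_eq_zero (Finset.mem_univ j) (by ring)
        have hne₁ : lam j ≠ x₁ := fun he => h₁nr (he ▸ hjroot)
        have hne₂ : lam j ≠ x₂ := fun he => h₂nr (he ▸ hjroot)
        have hgt : x₁ < lam j := lt_of_le_of_ne ha (Ne.symm hne₁)
        have hlt' : lam j < x₂ := lt_of_le_of_ne hb hne₂
        have hjD : lam j ∈ D := (hmemD _).mpr ⟨(mem_roots hP0).mpr hjroot,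
          lt_trans hQ₁.1 hgt, le_trans (le_of_lt hlt') hQ₂.2⟩
        have := hmin₁ (lam j) hjD hgt
        rw [heq] at this
        linarith [hgt₂]
      have hxne₁ : ∀ j, x₁ ≠ lam j := hrootne x₁ h₁nr
      have hxne₂ : ∀ j, x₂ ≠ lam j := hrootne x₂ h₂nr
      have hz₁ : ∑ j : Fin N, (x₁ - lam j)⁻¹ = 0 :=
        sum_inv_eq_zero lam hxne₁ (hPdef ▸ (mem_roots hP'0).mp hs₁)
      have hz₂ : ∑ j : Fin N, (x₂ - lam j)⁻¹ = 0 :=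
        sum_inv_eq_zero lam hxne₂ (hPdef ▸ (mem_roots hP'0).mp hs₂)
      have := sum_inv_lt hNpos lam hlt hnogap
      rw [hz₁, hz₂] at this
      exact lt_irrefl 0 this
    have hB : (F.filter (fun x => ¬ P.IsRoot x)).card ≤ D.card := by
      apply Finset.card_le_card_of_injOn f (fun x hx => (hfprop x hx).2.1)
      intro x₁ h₁ x₂ h₂ heq
      by_contra hne
      rcases lt_or_gt_of_ne hne with h | h
      · exact hkey x₁ (Finset.mem_coe.mp h₁) x₂ (Finset.mem_coe.mp h₂) h heq
      · exact hkey x₂ (Finset.mem_coe.mp h₂) x₁ (Finset.mem_coe.mp h₁) h heq.symm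
    have hBsum : ∑ x ∈ F.filter (fun x => ¬ P.IsRoot x), s.count x
        = (F.filter (fun x => ¬ P.IsRoot x)).card := by
      rw [Finset.sum_congr rfl hBcount]
      simp
    have hfinal : ∑ x ∈ D, (P.roots.count x - 1) + D.card = ∑ x ∈ D, P.roots.count x := by
      rw [Finset.card_eq_sum_ones, ← Finset.sum_add_distrib]
      refine Finset.sum_congr rfl fun x hx => ?_
      have : 1 ≤ P.roots.count x := Multiset.one_le_count_iff_mem.mpr ((hmemD x).mp hx).1
      omega
    calc t.card = ∑ x ∈ F, s.count x := hcardt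
      _ = _ + _ := hsplit
      _ ≤ ∑ x ∈ D, (P.roots.count x - 1) + D.card := by
          refine Nat.add_le_add hA ?_
          rw [hBsum]; exact hB
      _ = ∑ x ∈ D, P.roots.count x := hfinal
      _ = k - 1 := hDsum
  -- existence of a critical point in (L, ε)
  have hμex : ∃ μ, (derivative P).IsRoot μ ∧ L < μ ∧ μ < ε := by
    set s1 := (derivative P).roots.filter (fun x => -ε < x ∧ x < ε) with hs1
    have hadd : (s1.filter (fun x => x ≤ L)).card + (s1.filter (fun x => ¬ x ≤ L)).card
        = s1.card := by
      rw [← Multiset.card_add, Multiset.filter_add_not]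
    have hle : (s1.filter (fun x => x ≤ L)).card
        ≤ ((derivative P).roots.filter (fun x => -ε < x ∧ x ≤ L)).card := by
      apply Multiset.card_le_card
      rw [hs1, Multiset.filter_filter]
      apply Multiset.monotone_filter_right
      rintro x ⟨hxL, hx1, _⟩
      exact ⟨hx1, hxL⟩
    have hpos : 0 < (s1.filter (fun x => ¬ x ≤ L)).card := by omega
    obtain ⟨μ, hμ⟩ := Multiset.card_pos_iff_exists_mem.mp hpos
    obtain ⟨hμ1, hμ2⟩ := Multiset.mem_filter.mp hμ
    obtain ⟨hμr, hμw⟩ := Multiset.mem_filter.mp hμ1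
    exact ⟨μ, (mem_roots hP'0).mp hμr, lt_of_not_ge hμ2, hμw.2⟩
  obtain ⟨μ, hμroot, hLμ, hμε⟩ := hμex
  have hμne : ∀ j, μ ≠ lam j := by
    intro j he
    rcases htrich j with h | h
    · rw [← he] at h; linarith
    · rw [← he] at h; linarith
  have hgμ : ∑ j : Fin N, (μ - lam j)⁻¹ = 0 :=
    sum_inv_eq_zero lam hμne (hPdef ▸ hμroot)
  have hgε : ∑ j : Fin N, (ε - lam j)⁻¹ < 0 := by
    have hcond : ∀ j, lam j < μ ∨ ε < lam j := by
      intro j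
      rcases htrich j with h | h
      · exact Or.inl (lt_of_le_of_lt h hLμ)
      · exact Or.inr (lt_of_lt_of_le hcε h)
    have := sum_inv_lt hNpos lam hμε hcond
    rw [hgμ] at this
    exact this
  have htot : 0 ≤ ∑ j : Fin N, 1 / (lam j - ε) := by
    have heq : ∑ j : Fin N, 1 / (lam j - ε) = - ∑ j : Fin N, (ε - lam j)⁻¹ := by
      rw [← Finset.sum_neg_distrib]
      refine Finset.sum_congr rfl fun j _ => ?_
      rw [one_div]
      rw [show lam j - ε = -(ε - lam j) by ring, inv_neg]
    rw [heq]
    linarith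
  have hWsum : ∑ j ∈ W, 1 / (lam j - ε) ≤ -(((k:ℝ) - 1) / (2 * ε)) := by
    have hterm : ∀ j ∈ W, 1 / (lam j - ε) ≤ -(1 / (2 * ε)) := by
      intro j hj
      have hw := (Finset.mem_filter.mp hj).2
      have h1 : lam j - ε < 0 := by linarith [hw.2]
      have h2 : -(2 * ε) < lam j - ε := by linarith [hw.1]
      have := one_div_lt_one_div_of_neg_of_lt h1 h2
      have hrw : 1 / -(2 * ε) = -(1 / (2 * ε)) := by ring
      linarith [hrw ▸ this]
    calc ∑ j ∈ W, 1 / (lam j - ε) ≤ ∑ j ∈ W, -(1 / (2 * ε)) := Finset.sum_le_sum hterm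
      _ = (W.card : ℝ) * -(1 / (2 * ε)) := by rw [Finset.sum_const, nsmul_eq_mul]
      _ = -(((k:ℝ) - 1) / (2 * ε)) := by
          rw [hwindow]
          rw [Nat.cast_sub (by omega : 1 ≤ k)]
          push_cast
          ring
  have hsplitsum : ∑ j ∈ W, 1 / (lam j - ε)
      + ∑ j ∈ Finset.univ.filter (fun j => ¬ (-ε < lam j ∧ lam j < (1 + 4 / ((k : ℝ) - 1)) * ε)), 1 / (lam j - ε)
      = ∑ j : Fin N, 1 / (lam j - ε) := by
    have hco : Finset.univ.filter (fun j => ¬ (-ε < lam j ∧ lam j < (1 + 4 / ((k : ℝ) - 1)) * ε))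
        = Finset.univ.filter (fun j => ¬ (-ε < lam j ∧ lam j < ε)) := by
      refine Finset.filter_congr fun j _ => ?_
      constructor
      · intro h hcon
        exact h ⟨hcon.1, lt_trans hcon.2 hcε⟩
      · intro h hcon
        refine h ⟨hcon.1, ?_⟩
        rcases hgap' j with h' | h'
        · exact h'
        · linarith [hcon.2]
    rw [hco, hWdef]
    exact Finset.sum_filter_add_sum_filter_not Finset.univ _ _
  linarith [hsplitsum, hWsum, htot]
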